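/- Let 1 → A → B → C → 1 be a short exact sequence of abelian groups (written multiplicatively) and let π : D → A be a surjective homomorphism of abelian groups. For each α ∈ C choose a preimage u_α ∈ B under the surjection B → C. Then there exists a map f : C × C → D which is a symmetric 2-cocycle, i.e. f(α,β) = f(β,α) and f(α,β)·f(αβ,γ) = f(β,γ)·f(α,βγ) for all α, β, γ ∈ C, and which satisfies π(f(α,β)) = u_α⁻¹ u_β⁻¹ u_{αβ} for all α, β ∈ C (note that u_α⁻¹ u_β⁻¹ u_{αβ} lies in the image of A in B). -/

import Mathlib

open Function

/-- Additive core: symmetric 2-cocycle lifting along a surjection, using divisible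
(injective) abelian groups. -/
private lemma key_additive (A B C D : Type*) [AddCommGroup A] [AddCommGroup B]
    [AddCommGroup C] [AddCommGroup D]
    (i : A →+ B) (q : B →+ C) (hi : Function.Injective i)
    (hexact : ∀ b : B, q b = 0 → ∃ a : A, i a = b)
    (π : D →+ A) (hπ : Function.Surjective π)
    (u : C → B) (hu : ∀ c : C, q (u c) = c) :
    ∃ f : C → C → D,
      (∀ a b : C, f a b = f b a) ∧
      (∀ a b c : C, f a b + f (a + b) c = f b c + f a (b + c)) ∧
      (∀ a b : C, i (π (f a b)) = -(u a) + (-(u b) + u (a + b))) := by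
  classical
  -- the divisible group `Q` and the embedding of `ker π`
  set K := π.ker with hK
  let Q := CharacterModule ↥K → AddCircle (1 : ℚ)
  have baer : Module.Baer ℤ Q := Module.Baer.of_divisible Q
  let e : ↥K →+ Q := AddMonoidHom.mk' (fun k χ => χ k)
    (fun a b => funext fun χ => map_add χ a b)
  have he : Function.Injective e := by
    rw [injective_iff_map_eq_zero]
    intro k hk
    exact CharacterModule.eq_zero_of_character_apply fun χ => congrFun hk χ
  -- extend `e` to `θ : D →+ Q`
  obtain ⟨θ, hθ⟩ := baer.extension_property_addMonoidHom K.subtype K.subtype_injective e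
  have hθ' : ∀ k : ↥K, θ (k : D) = e k := fun k => DFunLike.congr_fun hθ k
  -- quotient
  let Q' := Q ⧸ e.range
  let mkq : Q →+ Q' := QuotientAddGroup.mk' e.range
  have hmkq : Function.Surjective mkq := QuotientAddGroup.mk'_surjective e.range
  haveI : DivisibleBy Q' ℤ := hmkq.divisibleBy _ (fun a n => map_zsmul mkq n a)
  have baer' : Module.Baer ℤ Q' := Module.Baer.of_divisible Q'
  -- `ψ : A →+ Q'` induced by `θ`
  have hker : π.ker ≤ (mkq.comp θ).ker := by
    intro d hd
    have : θ d = e ⟨d, hd⟩ := hθ' ⟨d, hd⟩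
    simp only [AddMonoidHom.mem_ker, AddMonoidHom.comp_apply, this]
    exact (QuotientAddGroup.eq_zero_iff _).mpr ⟨⟨d, hd⟩, rfl⟩
  let ψ : A →+ Q' := π.liftOfRightInverse (Function.surjInv hπ)
    (Function.rightInverse_surjInv hπ) ⟨mkq.comp θ, hker⟩
  have hcompat : ∀ d : D, ψ (π d) = mkq (θ d) := fun d =>
    π.liftOfRightInverse_comp_apply _ _ ⟨mkq.comp θ, hker⟩ d
  -- the `A`-valued cocycle `g`
  have hg : ∀ a b : C, ∃ x : A, i x = -(u a) + (-(u b) + u (a + b)) := by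
    intro a b
    refine hexact _ ?_
    simp [hu]
  choose g hgi using hg
  have gsymm : ∀ a b : C, g a b = g b a := by
    intro a b
    apply hi
    rw [hgi, hgi, add_comm a b]
    abel
  have gcoc : ∀ a b c : C, g a b + g (a + b) c = g b c + g a (b + c) := by
    intro a b c
    apply hi
    rw [map_add, map_add, hgi, hgi, hgi, hgi, add_assoc a b c]
    abel
  -- pushout `E` of `B` along `ψ`
  let j : A →+ Q' × B := AddMonoidHom.mk' (fun a => (-ψ a, i a))
    (fun a b => by simp [Prod.ext_iff, map_add]; abel)
  let E := (Q' × B) ⧸ j.range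
  let mkE : Q' × B →+ E := QuotientAddGroup.mk' j.range
  let ι : Q' →+ E := mkE.comp (AddMonoidHom.inl Q' B)
  have ιinj : Function.Injective ι := by
    rw [injective_iff_map_eq_zero]
    intro x hx
    have hmem : ((x, 0) : Q' × B) ∈ j.range := (QuotientAddGroup.eq_zero_iff _).mp hx
    obtain ⟨a, ha⟩ := hmem
    have ha1 : -ψ a = x := congrArg Prod.fst ha
    have ha2 : i a = 0 := congrArg Prod.snd ha
    have : a = 0 := hi (by simpa using ha2)
    simp [← ha1, this]
  -- splitting of `E → C` over `Q'`
  obtain ⟨ρ, hρ⟩ := baer'.extension_property_addMonoidHom (M := Q') (N := E) ι ιinj (AddMonoidHom.id Q')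
  have hρ' : ∀ x : Q', ρ (ι x) = x := fun x => DFunLike.congr_fun hρ x
  let v : C → E := fun c => mkE (0, u c)
  have key1 : ∀ a b : C, ι (ψ (g a b)) = -(v a) + (-(v b) + v (a + b)) := by
    intro a b
    show mkE (ψ (g a b), 0) = -(mkE (0, u a)) + (-(mkE (0, u b)) + mkE (0, u (a + b)))
    rw [← map_neg, ← map_neg, ← map_add, ← map_add]
    refine (QuotientAddGroup.mk'_eq_mk' _).mpr ⟨j (g a b), ⟨g a b, rfl⟩, ?_⟩
    have hj : j (g a b) = (-ψ (g a b), i (g a b)) := rfl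
    rw [hj]
    refine Prod.ext ?_ ?_
    · show ψ (g a b) + -ψ (g a b) = -(0:Q') + (-(0:Q') + 0)
      simp
    · show 0 + i (g a b) = -(u a) + (-(u b) + u (a + b))
      rw [zero_add, hgi]
  let mbar : C → Q' := fun c => ρ (v c)
  have key2 : ∀ a b : C, ψ (g a b) = -(mbar a) + (-(mbar b) + mbar (a + b)) := by
    intro a b
    have := congrArg ρ (key1 a b)
    rwa [hρ', map_add, map_add, map_neg, map_neg] at this
  choose m hm using fun c => hmkq (mbar c)
  have hx : ∀ a b : C, mkq (-(m a) + (-(m b) + m (a + b))) = ψ (g a b) := by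
    intro a b
    rw [map_add, map_add, map_neg, map_neg, hm, hm, hm, key2]
  -- injectivity of `d ↦ (π d, θ d)`
  have Φinj : ∀ d d' : D, π d = π d' → θ d = θ d' → d = d' := by
    intro d d' h1 h2
    have hmem : d - d' ∈ K := by
      simp [hK, AddMonoidHom.mem_ker, map_sub, h1]
    have h3 : e ⟨d - d', hmem⟩ = 0 := by
      rw [← hθ' ⟨d - d', hmem⟩]
      show θ (d - d') = 0
      rw [map_sub, h2, sub_self]
    have := he (by rw [h3, map_zero] : e ⟨d - d', hmem⟩ = e 0)
    have h4 : d - d' = 0 := congrArg Subtype.val this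
    exact sub_eq_zero.mp h4
  -- construct `f`
  have hf : ∀ a b : C, ∃ d : D, π d = g a b ∧ θ d = -(m a) + (-(m b) + m (a + b)) := by
    intro a b
    obtain ⟨d₀, hd₀⟩ := hπ (g a b)
    have h1 : mkq (θ d₀ - (-(m a) + (-(m b) + m (a + b)))) = 0 := by
      rw [map_sub, hx, ← hcompat, hd₀, sub_self]
    obtain ⟨k, hk⟩ : θ d₀ - (-(m a) + (-(m b) + m (a + b))) ∈ e.range :=
      (QuotientAddGroup.eq_zero_iff _).mp h1
    refine ⟨d₀ - (k : D), ?_, ?_⟩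
    · have : π (k : D) = 0 := k.2
      rw [map_sub, this, hd₀, sub_zero]
    · rw [map_sub, hθ' k, hk, sub_sub_cancel]
  choose f hf1 hf2 using hf
  refine ⟨f, ?_, ?_, ?_⟩
  · intro a b
    refine Φinj _ _ ?_ ?_
    · rw [hf1, hf1, gsymm]
    · rw [hf2, hf2, add_comm a b]
      abel
  · intro a b c
    refine Φinj _ _ ?_ ?_
    · rw [map_add, map_add, hf1, hf1, hf1, hf1, gcoc]
    · rw [map_add, map_add, hf2, hf2, hf2, hf2, add_assoc a b c]
      abel
  · intro a b
    rw [hf1, hgi]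

theorem exists_symmetric_cocycle_lift
    (A B C D : Type*) [CommGroup A] [CommGroup B] [CommGroup C] [CommGroup D]
    (i : A →* B) (q : B →* C)
    (hi : Function.Injective i) (hq : Function.Surjective q)
    (hexact : i.range = q.ker)
    (π : D →* A) (hπ : Function.Surjective π)
    (u : C → B) (hu : ∀ c : C, q (u c) = c) :
    ∃ f : C → C → D,
      (∀ a b : C, f a b = f b a) ∧
      (∀ a b c : C, f a b * f (a * b) c = f b c * f a (b * c)) ∧
      (∀ a b : C, i (π (f a b)) = (u a)⁻¹ * (u b)⁻¹ * u (a * b)) := by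
  obtain ⟨f, h1, h2, h3⟩ := key_additive (Additive A) (Additive B) (Additive C) (Additive D)
    (MonoidHom.toAdditive i) (MonoidHom.toAdditive q)
    (fun a b h => hi (congrArg Additive.toMul h))
    (fun b hb => by
      have hbk : Additive.toMul b ∈ q.ker := hb
      rw [← hexact] at hbk
      obtain ⟨a, ha⟩ := hbk
      exact ⟨Additive.ofMul a, congrArg Additive.ofMul ha⟩)
    (MonoidHom.toAdditive π)
    (fun a => by obtain ⟨d, hd⟩ := hπ (Additive.toMul a);
                 exact ⟨Additive.ofMul d, congrArg Additive.ofMul hd⟩)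
    (fun c => Additive.ofMul (u (Additive.toMul c)))
    (fun c => congrArg Additive.ofMul (hu (Additive.toMul c)))
  refine ⟨fun a b => Additive.toMul (f (Additive.ofMul a) (Additive.ofMul b)), ?_, ?_, ?_⟩
  · intro a b
    exact congrArg Additive.toMul (h1 (Additive.ofMul a) (Additive.ofMul b))
  · intro a b c
    have := h2 (Additive.ofMul a) (Additive.ofMul b) (Additive.ofMul c)
    exact congrArg Additive.toMul this
  · intro a b
    have := h3 (Additive.ofMul a) (Additive.ofMul b)
    have h4 := congrArg Additive.toMul this
    rw [mul_assoc]
    exact h4
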